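/- The function f : ℂ → ℂ given by f(z) = exp(z) − z is surjective; in particular the equation exp(z) = z + w has a solution for every w ∈ ℂ. -/

import Mathlib

open Complex

/-- `log` is Lipschitz on the half plane `{ζ | m ≤ im ζ}` with constant `m⁻¹`. -/
lemma log_lipschitzOnWith_halfplane {m : ℝ} (hm : 0 < m) :
    LipschitzOnWith m.toNNReal⁻¹ Complex.log {ζ : ℂ | m ≤ ζ.im} := by
  apply Convex.lipschitzOnWith_of_nnnorm_hasDerivWithin_le (convex_halfSpace_im_ge m)
    (f' := fun ζ : ℂ => ζ⁻¹)
  · intro x hx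
    refine (Complex.hasDerivAt_log ?_).hasDerivWithinAt
    exact Or.inr (by have : m ≤ x.im := hx; linarith)
  · intro x hx
    have hx' : m ≤ x.im := hx
    have habs : m ≤ ‖x‖ := le_trans (le_trans hx' (le_abs_self _))
      (Complex.abs_im_le_norm x)
    rw [← NNReal.coe_le_coe]
    push_cast [Real.coe_toNNReal _ hm.le]
    rw [norm_inv]
    exact inv_anti₀ hm habs

/-- Key lemma: `exp z = z + w` has a solution for every `w`. -/
lemma exists_exp_eq_add (w : ℂ) : ∃ z : ℂ, exp z = z + w := by
  obtain ⟨k, hk25, hkw⟩ : ∃ k : ℕ, (25 : ℝ) ≤ k ∧ ‖w‖ ≤ k := by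
    refine ⟨max 25 ⌈‖w‖⌉₊, ?_, ?_⟩
    · exact_mod_cast Nat.cast_le.2 (Nat.le_max_left 25 ⌈‖w‖⌉₊)
    · exact (Nat.le_ceil _).trans (Nat.cast_le.2 (Nat.le_max_right 25 ⌈‖w‖⌉₊))
  set r : ℝ := (k : ℝ) with hr
  have hr0 : (0 : ℝ) < r := by linarith
  have hπ3 : (3 : ℝ) ≤ Real.pi := Real.pi_gt_three.le
  have hπ4 : Real.pi ≤ 4 := Real.pi_le_four
  set c : ℂ := (2 * Real.pi * r) * I with hc
  set S : Set ℂ := Metric.closedBall c r with hS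
  set T : Set ℂ := {ζ : ℂ | 4 * r ≤ ζ.im} with hT
  set F : ℂ → ℂ := fun z => Complex.log (z + w) + c with hF
  have hcim : c.im = 2 * Real.pi * r := by simp [hc]
  have hcre : c.re = 0 := by simp [hc]
  -- membership facts
  have hmemT : ∀ z ∈ S, z + w ∈ T := by
    intro z hz
    have h1 : ‖z - c‖ ≤ r := by
      simpa [Complex.dist_eq] using Metric.mem_closedBall.1 hz
    have h2 : |(z - c).im| ≤ r := le_trans (Complex.abs_im_le_norm _) h1
    have h3 : |w.im| ≤ r := le_trans (le_trans (Complex.abs_im_le_norm w) hkw) le_rfl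
    have h4 : (z - c).im = z.im - 2 * Real.pi * r := by simp [Complex.sub_im, hcim]
    have h5 : z.im ≥ 2 * Real.pi * r - r := by
      have := abs_le.1 h2
      rw [h4] at this
      linarith [this.1]
    show 4 * r ≤ (z + w).im
    rw [Complex.add_im]
    have := abs_le.1 h3
    nlinarith
  have habs_lb : ∀ z ∈ S, 4 * r ≤ ‖z + w‖ := fun z hz =>
    le_trans (hmemT z hz) (le_trans (le_abs_self _) (Complex.abs_im_le_norm _))
  have habs_ub : ∀ z ∈ S, ‖z + w‖ ≤ 10 * r := by
    intro z hz
    have h1 : ‖z - c‖ ≤ r := by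
      simpa [Complex.dist_eq] using Metric.mem_closedBall.1 hz
    have hcabs : ‖c‖ ≤ 8 * r := by
      have hcc : c = ((2 * Real.pi * r : ℝ) : ℂ) * I := by rw [hc]; push_cast; ring
      rw [hcc, norm_mul, Complex.norm_I, mul_one, Complex.norm_real, Real.norm_eq_abs,
        _root_.abs_of_nonneg (by positivity : (0:ℝ) ≤ 2 * Real.pi * r)]
      nlinarith
    calc ‖z + w‖ ≤ ‖z - c‖ + ‖c‖ + ‖w‖ := by
          have hzw : z + w = (z - c) + c + w := by ring
          rw [hzw]
          exact (norm_add_le _ _).trans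
            (add_le_add_left (norm_add_le _ _) _)
      _ ≤ r + 8 * r + r := by gcongr
      _ ≤ 10 * r := by linarith
  -- the log bound : Real.log (9*r) + π ≤ r
  have hsq : Real.sqrt r * Real.sqrt r = r := Real.mul_self_sqrt hr0.le
  have hs5 : (5 : ℝ) ≤ Real.sqrt r := by
    have h := Real.sqrt_le_sqrt (show (25:ℝ) ≤ r from hk25)
    rwa [show Real.sqrt 25 = 5 by
      rw [show (25:ℝ) = 5^2 by norm_num, Real.sqrt_sq (by norm_num)]] at h
  have hlogr : Real.log r ≤ 2 * (Real.sqrt r - 1) := by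
    have h := Real.log_le_sub_one_of_pos (show (0:ℝ) < Real.sqrt r by nlinarith)
    calc Real.log r = Real.log (Real.sqrt r * Real.sqrt r) := by rw [hsq]
      _ = Real.log (Real.sqrt r) + Real.log (Real.sqrt r) :=
          Real.log_mul (by nlinarith) (by nlinarith)
      _ ≤ 2 * (Real.sqrt r - 1) := by linarith
  have hlogbound : Real.log (10 * r) + Real.pi ≤ r := by
    have h9 : (10 : ℝ) * r ≤ r ^ 2 := by nlinarith
    have h1 : Real.log (10 * r) ≤ Real.log (r ^ 2) :=
      Real.log_le_log (by positivity) h9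
    have h2 : Real.log (r ^ 2) = 2 * Real.log r := by
      rw [Real.log_pow]; push_cast; ring
    nlinarith [Real.sqrt_nonneg r]
  -- maps to
  have hmaps : Set.MapsTo F S S := by
    intro z hz
    show F z ∈ Metric.closedBall c r
    rw [Metric.mem_closedBall, Complex.dist_eq]
    have : F z - c = Complex.log (z + w) := by rw [hF]; ring
    rw [this]
    have hne : z + w ≠ 0 := by
      intro h
      have := habs_lb z hz
      rw [h, norm_zero] at this
      linarith
    have hre : |(Complex.log (z + w)).re| ≤ Real.log (10 * r) := by
      rw [Complex.log_re]
      rw [_root_.abs_of_nonneg (Real.log_nonneg (by linarith [habs_lb z hz]))]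
      exact Real.log_le_log (by linarith [habs_lb z hz]) (habs_ub z hz)
    have him : |(Complex.log (z + w)).im| ≤ Real.pi := by
      rw [Complex.log_im]; exact Complex.abs_arg_le_pi _
    calc ‖Complex.log (z + w)‖
        ≤ |(Complex.log (z + w)).re| + |(Complex.log (z + w)).im| :=
          Complex.norm_le_abs_re_add_abs_im _
      _ ≤ Real.log (10 * r) + Real.pi := add_le_add hre him
      _ ≤ r := hlogbound
  -- Lipschitz
  set K : NNReal := (4 * r).toNNReal⁻¹ with hK
  have hK1 : K < 1 := by
    rw [hK, ← NNReal.coe_lt_coe, NNReal.coe_inv,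
      Real.coe_toNNReal _ (by positivity : (0:ℝ) ≤ 4 * r), NNReal.coe_one]
    rw [inv_lt_one_iff₀]
    right
    linarith
  have hlip : LipschitzOnWith K F S := by
    intro a ha b hb
    have hlog := log_lipschitzOnWith_halfplane (show (0:ℝ) < 4 * r by positivity)
    have := hlog (hmemT a ha) (hmemT b hb)
    calc edist (F a) (F b) = edist (Complex.log (a + w)) (Complex.log (b + w)) := by
          rw [hF]; exact edist_add_right _ _ _
      _ ≤ K * edist (a + w) (b + w) := this
      _ = K * edist a b := by rw [edist_add_right]
  have hcS : c ∈ S := Metric.mem_closedBall_self hr0.le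
  have hcontr : ContractingWith K (hmaps.restrict F S S) :=
    ⟨hK1, hlip.mapsToRestrict hmaps⟩
  obtain ⟨y, hyS, hy, -, -⟩ :=
    hcontr.exists_fixedPoint' (Metric.isClosed_closedBall.isComplete) hmaps hcS (edist_ne_top _ _)
  refine ⟨y, ?_⟩
  have hne : y + w ≠ 0 := by
    intro h
    have := habs_lb y hyS
    rw [h, norm_zero] at this
    linarith
  have hexpc : exp c = 1 := by
    have := Complex.exp_nat_mul_two_pi_mul_I k
    rw [← this]
    congr 1
    rw [hc, hr]
    push_cast
    ring
  have hfix : Complex.log (y + w) + c = y := hy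
  calc exp y = exp (Complex.log (y + w) + c) := by rw [hfix]
    _ = exp (Complex.log (y + w)) * exp c := Complex.exp_add _ _
    _ = (y + w) * 1 := by rw [Complex.exp_log hne, hexpc]
    _ = y + w := mul_one _

/-- The entire function `z ↦ exp z − z` is surjective; in particular `exp z = z + w`
has a solution for every `w ∈ ℂ`. -/
theorem exp_sub_id_surjective :
    Function.Surjective (fun z : ℂ => exp z - z) ∧ ∀ w : ℂ, ∃ z : ℂ, exp z = z + w := by
  constructor
  · intro w
    obtain ⟨z, hz⟩ := exists_exp_eq_add w
    exact ⟨z, by simp [hz]⟩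
  · exact exists_exp_eq_add
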